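/- For all d ≥ 1, 1 ≤ j ≤ d+1, and 0 ≤ i ≤ d: binom(d, j-1) · A(d+1,i,j) = B(d,i,j-1), where B(d,i,k) is the number of signed permutations in B_d with i type-B descents and exactly k negative entries. -/

import Mathlib

open Finset

/-- The set of descent positions (0-based: `k ∈ descSet σ` means a descent between
the 1-based positions `k+1` and `k+2`) of a permutation of `Fin n`. -/
def descSet {n : ℕ} (σ : Equiv.Perm (Fin n)) : Finset (Fin n) :=
  Finset.univ.filter (fun k => ∃ m : Fin n, (m : ℕ) = (k : ℕ) + 1 ∧ σ m < σ k)

/-- The number of descents of a permutation of `Fin n`. -/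
def des {n : ℕ} (σ : Equiv.Perm (Fin n)) : ℕ := (descSet σ).card

/-- `A d i j` : the number of permutations `σ` of `{1,…,d}` with `σ(1) = j` and
exactly `i` descents (in particular `A d i j = 0` for `i < 0` or `i ≥ d`). -/
noncomputable def A (d : ℕ) (i : ℤ) (j : ℕ) : ℕ :=
  Nat.card {σ : Equiv.Perm (Fin d) //
    (∀ k : Fin d, (k : ℕ) = 0 → (σ k : ℕ) + 1 = j) ∧ (des σ : ℤ) = i}

/-- A signed permutation of `{±1,…,±d}` (an element of the hyperoctahedral group
`B_d`), encoded as an ordinary permutation together with a sign for each position. -/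
abbrev SignedPerm (d : ℕ) := Equiv.Perm (Fin d) × (Fin d → Bool)

/-- The value `τ(k) ∈ ℤ` of a signed permutation at position `k ∈ {1,…,d}`
(1-based), with the convention `τ(0) = 0`. -/
def sval {d : ℕ} (τ : SignedPerm d) (k : ℕ) : ℤ :=
  if h : 1 ≤ k ∧ k ≤ d then
    (if τ.2 ⟨k - 1, by omega⟩ then -(((τ.1 ⟨k - 1, by omega⟩ : Fin d) : ℕ) + 1 : ℤ)
     else (((τ.1 ⟨k - 1, by omega⟩ : Fin d) : ℕ) + 1 : ℤ))
  else 0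

/-- The number of type-`B` descents of a signed permutation: the number of
`i ∈ {0,…,d-1}` with `τ(i) > τ(i+1)` (where `τ(0) = 0`). -/
def desB {d : ℕ} (τ : SignedPerm d) : ℕ :=
  ((Finset.range d).filter (fun k => sval τ (k + 1) < sval τ k)).card

/-- `N(τ)`: the number of `i ∈ {1,…,d}` with `τ(i) < 0`. -/
def negEntries {d : ℕ} (τ : SignedPerm d) : ℕ :=
  ((Finset.Icc 1 d).filter (fun k => sval τ k < 0)).card

/-- `B d i j`: the number of signed permutations in `B_d` with `i` type-`B`
descents and `j` negative entries. -/
noncomputable def B (d i j : ℕ) : ℕ :=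
  Nat.card {τ : SignedPerm d // desB τ = i ∧ negEntries τ = j}

section Helpers

variable {d : ℕ}

/-- value function of a sign set -/
def fS (S : Finset (Fin d)) (a : Fin d) : ℤ :=
  if a ∈ S then -((a : ℕ) + 1 : ℤ) else ((a : ℕ) + 1 : ℤ)

lemma fS_ne_zero (S : Finset (Fin d)) (a : Fin d) : fS S a ≠ 0 := by
  unfold fS; split <;> omega

lemma fS_natAbs (S : Finset (Fin d)) (a : Fin d) : (fS S a).natAbs = (a : ℕ) + 1 := by
  unfold fS; split <;> omega

lemma fS_neg_iff (S : Finset (Fin d)) (a : Fin d) : fS S a < 0 ↔ a ∈ S := by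
  unfold fS; split <;> simp_all <;> omega

lemma fS_injective (S : Finset (Fin d)) : Function.Injective (fS S) := by
  intro a b h
  have h1 := fS_natAbs S a; have h2 := fS_natAbs S b
  rw [h] at h1
  exact Fin.ext (by omega)

def vset (S : Finset (Fin d)) : Finset ℤ := insert 0 (Finset.image (fS S) univ)

lemma card_vset (S : Finset (Fin d)) : (vset S).card = d + 1 := by
  rw [vset, card_insert_of_notMem, card_image_of_injective _ (fS_injective S), card_univ,
    Fintype.card_fin]
  simp only [mem_image, mem_univ, true_and, not_exists]
  exact fun a => fS_ne_zero S a

lemma mem_vset {S : Finset (Fin d)} {b : ℤ} :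
    b ∈ vset S ↔ b = 0 ∨ ∃ a, fS S a = b := by
  simp [vset, eq_comm]

noncomputable def wS (S : Finset (Fin d)) : Fin (d + 1) ≃o (vset S) :=
  (vset S).orderIsoOfFin (card_vset S)

noncomputable def W (S : Finset (Fin d)) (t : Fin (d + 1)) : ℤ := (wS S t : ℤ)

lemma W_strictMono (S : Finset (Fin d)) : StrictMono (W S) :=
  fun _ _ h => by exact_mod_cast (wS S).strictMono h

lemma W_mem (S : Finset (Fin d)) (t : Fin (d + 1)) : W S t ∈ vset S := (wS S t).2

/-- rank formula for orderIsoOfFin -/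
lemma rank_orderIsoOfFin {α : Type*} [LinearOrder α] (s : Finset α) {n : ℕ}
    (h : s.card = n) (x : s) :
    (((s.orderIsoOfFin h).symm x : Fin n) : ℕ) = (s.filter (· < (x : α))).card := by
  set w := s.orderIsoOfFin h with hw
  have him : s.filter (· < (x : α)) = (Finset.Iio (w.symm x)).image (fun t => (w t : α)) := by
    ext b
    simp only [mem_filter, mem_image, mem_Iio]
    constructor
    · rintro ⟨hb, hlt⟩
      refine ⟨w.symm ⟨b, hb⟩, ?_, by simp⟩
      rw [← w.lt_iff_lt]
      simpa using (show (⟨b, hb⟩ : s) < x from hlt)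
    · rintro ⟨t, ht, rfl⟩
      refine ⟨(w t).2, ?_⟩
      rw [← w.lt_iff_lt] at ht
      simpa using ht
  rw [him, card_image_of_injective _ (fun a b hab => w.injective (Subtype.ext hab)),
    Fin.card_Iio]

lemma zero_mem_vset (S : Finset (Fin d)) : (0 : ℤ) ∈ vset S := mem_insert_self _ _

lemma S_card_le (S : Finset (Fin d)) : S.card ≤ d := by
  simpa using card_le_card (subset_univ S)

noncomputable def posZ (S : Finset (Fin d)) : Fin (d + 1) :=
  (wS S).symm ⟨0, zero_mem_vset S⟩

lemma posZ_val (S : Finset (Fin d)) : ((posZ S : Fin (d + 1)) : ℕ) = S.card := by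
  rw [posZ, wS, rank_orderIsoOfFin]
  have : (vset S).filter (· < (0 : ℤ)) = S.image (fS S) := by
    ext b
    simp only [mem_filter, mem_image, mem_vset]
    constructor
    · rintro ⟨h1 | ⟨a, rfl⟩, h2⟩
      · omega
      · exact ⟨a, (fS_neg_iff S a).mp h2, rfl⟩
    · rintro ⟨a, ha, rfl⟩
      exact ⟨Or.inr ⟨a, rfl⟩, (fS_neg_iff S a).mpr ha⟩
  rw [this, card_image_of_injective _ (fS_injective S)]

lemma W_posZ (S : Finset (Fin d)) : W S (posZ S) = 0 := by
  simp [W, posZ]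

lemma W_eq_zero_iff (S : Finset (Fin d)) (t : Fin (d + 1)) :
    W S t = 0 ↔ (t : ℕ) = S.card := by
  constructor
  · intro h
    have : t = posZ S := (W_strictMono S).injective (by rw [h, W_posZ])
    rw [this, posZ_val]
  · intro h
    have : t = posZ S := Fin.ext (by rw [h, posZ_val])
    rw [this, W_posZ]

lemma W_neg_iff (S : Finset (Fin d)) (t : Fin (d + 1)) :
    W S t < 0 ↔ (t : ℕ) < S.card := by
  rw [← W_posZ S, (W_strictMono S).lt_iff_lt, Fin.lt_iff_val_lt_val, posZ_val]

lemma W_ne_zero_natAbs {S : Finset (Fin d)} {t : Fin (d + 1)} (h : W S t ≠ 0) :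
    1 ≤ (W S t).natAbs ∧ (W S t).natAbs ≤ d := by
  rcases mem_vset.mp (W_mem S t) with h0 | ⟨a, ha⟩
  · exact absurd h0 h
  · rw [← ha, fS_natAbs]; exact ⟨by omega, by omega⟩

noncomputable def Fperm (S : Finset (Fin d)) (σ : Equiv.Perm (Fin (d + 1)))
    (h : ∀ m : Fin d, W S (σ m.succ) ≠ 0) : Fin d → Fin d :=
  fun m => ⟨(W S (σ m.succ)).natAbs - 1, by have := W_ne_zero_natAbs (h m); omega⟩

lemma W_natAbs_inj {S : Finset (Fin d)} {t t' : Fin (d + 1)}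
    (h : W S t ≠ 0) (h' : W S t' ≠ 0) (hab : (W S t).natAbs = (W S t').natAbs) : t = t' := by
  rcases mem_vset.mp (W_mem S t) with h0 | ⟨a, ha⟩
  · exact absurd h0 h
  rcases mem_vset.mp (W_mem S t') with h0' | ⟨a', ha'⟩
  · exact absurd h0' h'
  apply (W_strictMono S).injective
  rw [← ha, ← ha'] at hab ⊢
  rw [fS_natAbs, fS_natAbs] at hab
  have : a = a' := Fin.ext (by omega)
  rw [this]

lemma Fperm_injective (S : Finset (Fin d)) (σ : Equiv.Perm (Fin (d + 1)))
    (h : ∀ m : Fin d, W S (σ m.succ) ≠ 0) : Function.Injective (Fperm S σ h) := by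
  intro m m' hmm
  have h1 := W_ne_zero_natAbs (h m)
  have h2 := W_ne_zero_natAbs (h m')
  have : (W S (σ m.succ)).natAbs = (W S (σ m'.succ)).natAbs := by
    have := Fin.mk.injEq _ _ _ _ ▸ hmm
    simp only [Fperm, Fin.mk.injEq] at hmm
    omega
  have := W_natAbs_inj (h m) (h m') this
  exact Fin.succ_injective _ (σ.injective this)

noncomputable def Fmap (S : Finset (Fin d)) (σ : Equiv.Perm (Fin (d + 1)))
    (h : ∀ m : Fin d, W S (σ m.succ) ≠ 0) : SignedPerm d :=
  (Equiv.ofBijective (Fperm S σ h)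
      (Finite.injective_iff_bijective.mp (Fperm_injective S σ h)),
    fun m => decide (W S (σ m.succ) < 0))

lemma sval_Fmap (S : Finset (Fin d)) (σ : Equiv.Perm (Fin (d + 1)))
    (h : ∀ m : Fin d, W S (σ m.succ) ≠ 0) (hσ0 : ((σ 0 : Fin (d + 1)) : ℕ) = S.card)
    (t : Fin (d + 1)) : sval (Fmap S σ h) (t : ℕ) = W S (σ t) := by
  by_cases ht : (t : ℕ) = 0
  · have h0 : t = 0 := Fin.ext (by simpa using ht)
    subst h0
    rw [show ((0 : Fin (d+1)) : ℕ) = 0 from rfl, sval, dif_neg (by omega)]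
    exact ((W_eq_zero_iff S (σ 0)).mpr hσ0).symm
  · have h1 : 1 ≤ (t : ℕ) ∧ (t : ℕ) ≤ d := ⟨by omega, by omega⟩
    rw [sval, dif_pos h1]
    set m : Fin d := ⟨(t : ℕ) - 1, by omega⟩ with hm
    have hms : m.succ = t := Fin.ext (by rw [Fin.val_succ]; show (t : ℕ) - 1 + 1 = (t : ℕ); omega)
    have hW := W_ne_zero_natAbs (h m)
    have hfst : (((Fmap S σ h).1 m : Fin d) : ℕ) = (W S (σ m.succ)).natAbs - 1 := rfl
    have hsnd : (Fmap S σ h).2 m = decide (W S (σ m.succ) < 0) := rfl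
    rw [hfst, hsnd, hms]
    rw [hms] at hW
    by_cases hneg : W S (σ t) < 0
    · rw [decide_eq_true hneg, if_pos rfl]
      omega
    · rw [decide_eq_false hneg, if_neg (by simp)]
      omega

lemma sval_zero (τ : SignedPerm d) : sval τ 0 = 0 := by
  rw [sval, dif_neg (by omega)]

lemma desB_eq_des (τ : SignedPerm d) (S : Finset (Fin d)) (σ : Equiv.Perm (Fin (d + 1)))
    (hsv : ∀ t : Fin (d + 1), sval τ (t : ℕ) = W S (σ t)) : desB τ = des σ := by
  have key : ∀ (k : ℕ) (hk : k < d),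
      (sval τ (k + 1) < sval τ k ↔ σ ⟨k + 1, by omega⟩ < σ ⟨k, by omega⟩) := by
    intro k hk
    have h1 := hsv ⟨k + 1, by omega⟩
    have h2 := hsv ⟨k, by omega⟩
    simp only [Fin.val_mk] at h1 h2 -- coe of mk
    rw [h1, h2, (W_strictMono S).lt_iff_lt]
  rw [desB, des, descSet]
  refine card_bij' (fun k hk => (⟨k, by simp at hk; omega⟩ : Fin (d + 1)))
    (fun k _ => (k : ℕ)) ?_ ?_ ?_ ?_
  · intro k hk
    simp only [mem_filter, mem_range] at hk
    simp only [mem_filter, mem_univ, true_and]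
    exact ⟨⟨k + 1, by omega⟩, by simp, (key k hk.1).mp hk.2⟩
  · intro k hk
    simp only [mem_filter, mem_univ, true_and] at hk
    obtain ⟨m, hm1, hm2⟩ := hk
    have hkd : (k : ℕ) < d := by have := m.isLt; omega
    simp only [mem_filter, mem_range]
    refine ⟨hkd, (key k hkd).mpr ?_⟩
    have hmeq : m = ⟨(k : ℕ) + 1, by omega⟩ := Fin.ext (by simpa using hm1)
    rw [hmeq] at hm2
    exact hm2
  · intro k _; rfl
  · intro k _; rfl

lemma negEntries_eq (τ : SignedPerm d) (S : Finset (Fin d)) (σ : Equiv.Perm (Fin (d + 1)))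
    (hsv : ∀ t : Fin (d + 1), sval τ (t : ℕ) = W S (σ t)) : negEntries τ = S.card := by
  have hσ0 : ((σ 0 : Fin (d + 1)) : ℕ) = S.card := by
    have := hsv 0
    rw [show ((0 : Fin (d+1)) : ℕ) = 0 from rfl, sval_zero] at this
    exact (W_eq_zero_iff S (σ 0)).mp this.symm
  have htarget : (univ.filter (fun t : Fin (d + 1) => (t : ℕ) < S.card)).card = S.card := by
    have hlt : S.card < d + 1 := by have := S_card_le S; omega
    have : univ.filter (fun t : Fin (d + 1) => (t : ℕ) < S.card)
        = Finset.Iio (⟨S.card, hlt⟩ : Fin (d + 1)) := by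
      ext t; simp [Fin.lt_iff_val_lt_val]
    rw [this, Fin.card_Iio]
  rw [negEntries, ← htarget]
  refine card_bij' (fun m hm => σ ⟨m, by simp at hm; omega⟩)
    (fun t _ => ((σ.symm t : Fin (d + 1)) : ℕ)) ?_ ?_ ?_ ?_
  · intro m hm
    simp only [mem_filter, mem_Icc] at hm
    obtain ⟨⟨h1, h2⟩, h3⟩ := hm
    simp only [mem_filter, mem_univ, true_and]
    have := hsv ⟨m, by omega⟩
    simp only [Fin.val_mk] at this
    rw [this] at h3
    exact (W_neg_iff S _).mp h3
  · intro t ht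
    simp only [mem_filter, mem_univ, true_and] at ht
    simp only [mem_filter, mem_Icc]
    have hne : σ.symm t ≠ 0 := by
      intro h0
      have : t = σ 0 := by rw [← h0]; simp
      rw [this] at ht; omega
    have hpos : 1 ≤ ((σ.symm t : Fin (d + 1)) : ℕ) := by
      rcases Nat.eq_zero_or_pos ((σ.symm t : Fin (d + 1)) : ℕ) with h | h
      · exact absurd (Fin.ext h) hne
      · exact h
    refine ⟨⟨hpos, by omega⟩, ?_⟩
    have := hsv ⟨((σ.symm t : Fin (d + 1)) : ℕ), by omega⟩
    have heq : (⟨((σ.symm t : Fin (d + 1)) : ℕ), by omega⟩ : Fin (d + 1)) = σ.symm t :=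
      Fin.ext rfl
    rw [heq] at this
    rw [this, Equiv.apply_symm_apply]
    exact (W_neg_iff S t).mpr ht
  · intro m hm
    beta_reduce
    simp only [Equiv.symm_apply_apply]
  · intro t ht
    beta_reduce
    have heq : (⟨((σ.symm t : Fin (d + 1)) : ℕ), by omega⟩ : Fin (d + 1)) = σ.symm t :=
      Fin.ext rfl
    rw [heq, Equiv.apply_symm_apply]

/-- the set of negated absolute values of a signed permutation -/
def Sof (τ : SignedPerm d) : Finset (Fin d) :=
  (univ.filter fun m => τ.2 m = true).image τ.1

lemma mem_Sof (τ : SignedPerm d) (m : Fin d) : τ.1 m ∈ Sof τ ↔ τ.2 m = true := by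
  simp only [Sof, mem_image, mem_filter, mem_univ, true_and]
  constructor
  · rintro ⟨m', hm', heq⟩
    rwa [τ.1.injective heq] at hm'
  · intro h; exact ⟨m, h, rfl⟩

lemma sval_succ (τ : SignedPerm d) (m : Fin d) :
    sval τ ((m : ℕ) + 1) = fS (Sof τ) (τ.1 m) := by
  have h1 : 1 ≤ (m : ℕ) + 1 ∧ (m : ℕ) + 1 ≤ d := ⟨by omega, by omega⟩
  rw [sval, dif_pos h1]
  have hm : (⟨(m : ℕ) + 1 - 1, by omega⟩ : Fin d) = m := Fin.ext (by simp)
  rw [hm, fS]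
  by_cases h : τ.2 m = true
  · rw [if_pos h, if_pos ((mem_Sof τ m).mpr h)]
  · rw [if_neg (by simpa using h), if_neg (fun hc => h ((mem_Sof τ m).mp hc))]

lemma card_Sof (τ : SignedPerm d) : (Sof τ).card = negEntries τ := by
  rw [Sof, card_image_of_injective _ τ.1.injective, negEntries]
  refine card_bij' (fun m _ => (m : ℕ) + 1)
    (fun k hk => (⟨k - 1, by simp only [mem_filter, mem_Icc] at hk; omega⟩ : Fin d))
    ?_ ?_ ?_ ?_
  · intro m hm
    simp only [mem_filter, mem_univ, true_and] at hm
    simp only [mem_filter, mem_Icc]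
    refine ⟨⟨by omega, by omega⟩, ?_⟩
    rw [sval_succ]
    exact (fS_neg_iff _ _).mpr ((mem_Sof τ m).mpr hm)
  · intro k hk
    simp only [mem_filter, mem_Icc] at hk
    obtain ⟨⟨hk1, hk2⟩, hk3⟩ := hk
    simp only [mem_filter, mem_univ, true_and]
    set m : Fin d := ⟨k - 1, by omega⟩ with hmdef
    have : sval τ ((m : ℕ) + 1) < 0 := by
      have : (m : ℕ) + 1 = k := by simp [hmdef]; omega
      rwa [this]
    rw [sval_succ] at this
    exact (mem_Sof τ m).mp ((fS_neg_iff _ _).mp this)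
  · intro m hm
    beta_reduce
    exact Fin.ext (by simp)
  · intro k hk
    simp only [mem_filter, mem_Icc] at hk
    beta_reduce
    simp only [Fin.val_mk]
    omega

lemma sval_mem_vset (τ : SignedPerm d) (t : Fin (d + 1)) :
    sval τ (t : ℕ) ∈ vset (Sof τ) := by
  by_cases ht : (t : ℕ) = 0
  · rw [ht, sval_zero]; exact zero_mem_vset _
  · have hlt : (t : ℕ) - 1 < d := by omega
    have : (t : ℕ) = ((⟨(t : ℕ) - 1, hlt⟩ : Fin d) : ℕ) + 1 := by simp; omega
    rw [this, sval_succ]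
    exact mem_vset.mpr (Or.inr ⟨_, rfl⟩)

lemma sval_coe_injective (τ : SignedPerm d) :
    Function.Injective (fun t : Fin (d + 1) => sval τ (t : ℕ)) := by
  intro t t' heq
  simp only at heq
  by_cases ht : (t : ℕ) = 0 <;> by_cases ht' : (t' : ℕ) = 0
  · exact Fin.ext (by omega)
  · rw [ht, sval_zero] at heq
    have hlt : (t' : ℕ) - 1 < d := by omega
    have h2 : (t' : ℕ) = ((⟨(t' : ℕ) - 1, hlt⟩ : Fin d) : ℕ) + 1 := by simp; omega
    rw [h2, sval_succ] at heq
    exact absurd heq.symm (fS_ne_zero _ _)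
  · rw [ht', sval_zero] at heq
    have hlt : (t : ℕ) - 1 < d := by omega
    have h2 : (t : ℕ) = ((⟨(t : ℕ) - 1, hlt⟩ : Fin d) : ℕ) + 1 := by simp; omega
    rw [h2, sval_succ] at heq
    exact absurd heq (fS_ne_zero _ _)
  · have hlt : (t : ℕ) - 1 < d := by omega
    have hlt' : (t' : ℕ) - 1 < d := by omega
    have h2 : (t : ℕ) = ((⟨(t : ℕ) - 1, hlt⟩ : Fin d) : ℕ) + 1 := by simp; omega
    have h2' : (t' : ℕ) = ((⟨(t' : ℕ) - 1, hlt'⟩ : Fin d) : ℕ) + 1 := by simp; omega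
    rw [h2, sval_succ, h2', sval_succ] at heq
    have := τ.1.injective (fS_injective _ heq)
    have : ((t : ℕ) - 1 : ℕ) = ((t' : ℕ) - 1 : ℕ) := congrArg Fin.val this
    exact Fin.ext (by omega)

noncomputable def Gperm (τ : SignedPerm d) : Equiv.Perm (Fin (d + 1)) :=
  Equiv.ofBijective
    (fun t => (wS (Sof τ)).symm ⟨sval τ (t : ℕ), sval_mem_vset τ t⟩)
    (Finite.injective_iff_bijective.mp (by
      intro t t' heq
      exact sval_coe_injective τ (Subtype.ext_iff.mp ((wS (Sof τ)).symm.injective heq))))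

lemma W_Gperm (τ : SignedPerm d) (t : Fin (d + 1)) :
    W (Sof τ) (Gperm τ t) = sval τ (t : ℕ) := by
  show ((wS (Sof τ)) ((wS (Sof τ)).symm ⟨sval τ (t : ℕ), sval_mem_vset τ t⟩) : ℤ) = _
  rw [OrderIso.apply_symm_apply]

lemma Fmap_Gperm (τ : SignedPerm d)
    (h : ∀ m : Fin d, W (Sof τ) ((Gperm τ) m.succ) ≠ 0) :
    Fmap (Sof τ) (Gperm τ) h = τ := by
  have hW : ∀ m : Fin d, W (Sof τ) ((Gperm τ) m.succ) = fS (Sof τ) (τ.1 m) := by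
    intro m
    rw [W_Gperm]
    have : ((m.succ : Fin (d + 1)) : ℕ) = (m : ℕ) + 1 := rfl
    rw [this, sval_succ]
  refine Prod.ext ?_ ?_
  · apply Equiv.ext
    intro m
    apply Fin.ext
    show (W (Sof τ) ((Gperm τ) m.succ)).natAbs - 1 = ((τ.1 m : Fin d) : ℕ)
    rw [hW m, fS_natAbs]; omega
  · funext m
    show decide (W (Sof τ) ((Gperm τ) m.succ) < 0) = τ.2 m
    rw [hW m]
    by_cases hm : τ.2 m = true
    · rw [decide_eq_true ((fS_neg_iff _ _).mpr ((mem_Sof τ m).mpr hm)), hm]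
    · have : ¬ fS (Sof τ) (τ.1 m) < 0 := fun hc => hm ((mem_Sof τ m).mp ((fS_neg_iff _ _).mp hc))
      rw [decide_eq_false this]
      simp at hm
      rw [hm]

lemma vset_eq_image (S : Finset (Fin d)) (σ : Equiv.Perm (Fin (d + 1))) :
    vset S = univ.image (fun t => W S (σ t)) := by
  ext b
  simp only [mem_image, mem_univ, true_and]
  constructor
  · intro hb
    exact ⟨σ.symm ((wS S).symm ⟨b, hb⟩), by simp [W]⟩
  · rintro ⟨t, rfl⟩
    exact W_mem S (σ t)

lemma vset_inj {S S' : Finset (Fin d)} (h : vset S = vset S') : S = S' := by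
  have key : ∀ (T T' : Finset (Fin d)), vset T = vset T' → T ⊆ T' := by
    intro T T' hTT a ha
    have : fS T a ∈ vset T' := hTT ▸ mem_vset.mpr (Or.inr ⟨a, rfl⟩)
    rcases mem_vset.mp this with h0 | ⟨a', ha'⟩
    · exact absurd h0 (fS_ne_zero T a)
    · have hneg : fS T' a' < 0 := by rw [ha']; exact (fS_neg_iff T a).mpr ha
      have haa : a' = a := by
        have h1 := fS_natAbs T' a'
        have h2 := fS_natAbs T a
        rw [ha'] at h1
        exact Fin.ext (by omega)
      rw [← haa]
      exact (fS_neg_iff T' a').mp hneg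
  exact Finset.Subset.antisymm (key _ _ h) (key _ _ h.symm)

lemma Fmap_inj {S S' : Finset (Fin d)} {σ σ' : Equiv.Perm (Fin (d + 1))}
    {h : ∀ m : Fin d, W S (σ m.succ) ≠ 0} {h' : ∀ m : Fin d, W S' (σ' m.succ) ≠ 0}
    (hσ0 : ((σ 0 : Fin (d + 1)) : ℕ) = S.card)
    (hσ0' : ((σ' 0 : Fin (d + 1)) : ℕ) = S'.card)
    (heq : Fmap S σ h = Fmap S' σ' h') : S = S' ∧ σ = σ' := by
  have hWW : ∀ t : Fin (d + 1), W S (σ t) = W S' (σ' t) := by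
    intro t
    rw [← sval_Fmap S σ h hσ0 t, ← sval_Fmap S' σ' h' hσ0' t, heq]
  have hSS : S = S' := by
    apply vset_inj
    rw [vset_eq_image S σ, vset_eq_image S' σ']
    exact image_congr (fun t _ => hWW t)
  subst hSS
  refine ⟨rfl, Equiv.ext fun t => (W_strictMono S).injective (hWW t)⟩

lemma W_ne_zero_of (S : Finset (Fin d)) (σ : Equiv.Perm (Fin (d + 1)))
    (hσ0 : ((σ 0 : Fin (d + 1)) : ℕ) = S.card) (m : Fin d) : W S (σ m.succ) ≠ 0 := by
  intro hWm
  rw [W_eq_zero_iff] at hWm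
  exact Fin.succ_ne_zero m (σ.injective (Fin.ext (by omega)))

end Helpers

/-- For `d ≥ 1`, `1 ≤ j ≤ d+1`, `0 ≤ i ≤ d`:
`binom(d, j-1) · A(d+1,i,j) = B(d,i,j-1)`. -/
theorem choose_mul_A_eq_B (d i j : ℕ) (hd : 1 ≤ d) (hj1 : 1 ≤ j)
    (hjd : j ≤ d + 1) (hi : i ≤ d) :
    d.choose (j - 1) * A (d + 1) (i : ℤ) j = B d i (j - 1) := by
  classical
  have hA : A (d + 1) (i : ℤ) j = (univ.filter (fun σ : Equiv.Perm (Fin (d + 1)) =>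
      (∀ k : Fin (d + 1), (k : ℕ) = 0 → ((σ k : Fin (d + 1)) : ℕ) + 1 = j) ∧
        (des σ : ℤ) = (i : ℤ))).card := by
    rw [A, Nat.card_eq_fintype_card, Fintype.card_subtype]
  have hB : B d i (j - 1) = (univ.filter (fun τ : SignedPerm d =>
      desB τ = i ∧ negEntries τ = j - 1)).card := by
    rw [B, Nat.card_eq_fintype_card, Fintype.card_subtype]
  have hchoose : d.choose (j - 1) = ((univ : Finset (Fin d)).powersetCard (j - 1)).card := by
    rw [card_powersetCard, card_univ, Fintype.card_fin]
  rw [hA, hB, hchoose, ← card_product]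
  refine card_bij (fun p hp => Fmap p.1 p.2 (W_ne_zero_of p.1 p.2 (by
      rw [mem_product, mem_powersetCard, mem_filter] at hp
      obtain ⟨⟨_, hcard⟩, _, hfirst, _⟩ := hp
      have h0 : ((p.2 0 : Fin (d + 1)) : ℕ) + 1 = j := hfirst 0 rfl
      omega))) ?_ ?_ ?_
  · intro p hp
    have hp' := hp
    rw [mem_product, mem_powersetCard, mem_filter] at hp'
    obtain ⟨⟨_, hcard⟩, _, hfirst, hdes⟩ := hp'
    have hσ0 : ((p.2 0 : Fin (d + 1)) : ℕ) = p.1.card := by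
      have := hfirst 0 rfl; omega
    have hsv := sval_Fmap p.1 p.2 (W_ne_zero_of p.1 p.2 hσ0) hσ0
    rw [mem_filter]
    refine ⟨mem_univ _, ?_, ?_⟩
    · exact (desB_eq_des _ p.1 p.2 hsv).trans (by exact_mod_cast hdes)
    · exact (negEntries_eq _ p.1 p.2 hsv).trans hcard
  · intro p1 h1 p2 h2 heq
    rw [mem_product, mem_powersetCard, mem_filter] at h1 h2
    obtain ⟨⟨_, hcard1⟩, _, hfirst1, _⟩ := h1
    obtain ⟨⟨_, hcard2⟩, _, hfirst2, _⟩ := h2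
    have hσ01 : ((p1.2 0 : Fin (d + 1)) : ℕ) = p1.1.card := by
      have := hfirst1 0 rfl; omega
    have hσ02 : ((p2.2 0 : Fin (d + 1)) : ℕ) = p2.1.card := by
      have := hfirst2 0 rfl; omega
    obtain ⟨hS, hσ⟩ := Fmap_inj hσ01 hσ02 heq
    exact Prod.ext hS hσ
  · intro b hb
    rw [mem_filter] at hb
    obtain ⟨_, hdesB, hneg⟩ := hb
    have hcard : (Sof b).card = j - 1 := by rw [card_Sof]; exact hneg
    have hsv : ∀ t : Fin (d + 1), sval b (t : ℕ) = W (Sof b) (Gperm b t) :=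
      fun t => (W_Gperm b t).symm
    have hfirst : ∀ kk : Fin (d + 1), (kk : ℕ) = 0 → ((Gperm b kk : Fin (d + 1)) : ℕ) + 1 = j := by
      intro kk hkk
      have hk0 : kk = 0 := Fin.ext hkk
      subst hk0
      have h0 : W (Sof b) (Gperm b 0) = 0 := by
        rw [W_Gperm]; exact sval_zero b
      have := (W_eq_zero_iff _ _).mp h0
      rw [this, hcard]; omega
    have hdes : (des (Gperm b) : ℤ) = (i : ℤ) := by
      rw [← desB_eq_des b (Sof b) (Gperm b) hsv, hdesB]
    refine ⟨(Sof b, Gperm b), ?_, ?_⟩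
    · rw [mem_product, mem_powersetCard, mem_filter]
      exact ⟨⟨subset_univ _, hcard⟩, mem_univ _, hfirst, hdes⟩
    · exact Fmap_Gperm b _
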